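/- Let f : F_2^{2n} → ℝ≥0 with Σ_α f(y,α) ≤ C for every y ∈ F_2^n for some constant C, and suppose a linear map ℓ : F_2^n → F_2^n satisfies Σ_{y} f(y, ℓ(y)) = η · 2^n, where additionally f(y,α) = 0 whenever ⟨y,α⟩ = 1, and f satisfies the symplectic Fourier inversion identity f(z) = (1/2^n)Σ_{z'} (-1)^{[z,z']} f(z') with normalization (1/2^n)Σ_z f(z) = 1. Then there exists a symmetric linear map ℓ' : F_2^n → F_2^n (i.e., ℓ' = ℓ'^t) with Σ_y f(y, ℓ'(y)) ≥ η² · 2^n. -/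

import Mathlib

open Finset
open scoped Classical

abbrev BV (n : ℕ) := Fin n → ZMod 2
abbrev Pt (n : ℕ) := BV n × BV n

def dotp {n : ℕ} (x y : BV n) : ZMod 2 := ∑ i, x i * y i
def symp {n : ℕ} (z w : Pt n) : ZMod 2 := dotp z.1 w.2 + dotp w.1 z.2
def sgn (b : ZMod 2) : ℝ := (-1 : ℝ) ^ b.val

lemma zmod2_cases (a : ZMod 2) : a = 0 ∨ a = 1 := by revert a; decide

lemma sgn_one : sgn 1 = -1 := by
  have : (1 : ZMod 2).val = 1 := rfl
  simp [sgn, this]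

lemma sgn_zero : sgn 0 = 1 := rfl
lemma sgn_add (a b : ZMod 2) : sgn (a + b) = sgn a * sgn b := by
  rcases zmod2_cases a with rfl|rfl <;> rcases zmod2_cases b with rfl|rfl <;>
    norm_num [sgn_zero, sgn_one] <;>
    · show sgn 0 = _; norm_num [sgn_zero]

lemma bv_add_self {n : ℕ} (v : BV n) : v + v = 0 := by
  funext i
  show v i + v i = 0
  rcases zmod2_cases (v i) with h|h <;> rw [h] <;> decide

lemma dotp_comm {n : ℕ} (x y : BV n) : dotp x y = dotp y x := by
  unfold dotp; exact Finset.sum_congr rfl fun i _ => mul_comm _ _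

lemma dotp_add_right {n : ℕ} (x y z : BV n) : dotp x (y + z) = dotp x y + dotp x z := by
  unfold dotp; rw [← Finset.sum_add_distrib]
  exact Finset.sum_congr rfl fun i _ => by show x i * (y i + z i) = _; ring

lemma dotp_add_left {n : ℕ} (x y z : BV n) : dotp (x + y) z = dotp x z + dotp y z := by
  rw [dotp_comm, dotp_add_right, dotp_comm z x, dotp_comm z y]

lemma card_BV (n : ℕ) : (Fintype.card (BV n) : ℝ) = 2 ^ n := by
  simp [Fintype.card_fun]

lemma sum_sgn_dotp {n : ℕ} (c : BV n) :
    ∑ y : BV n, sgn (dotp y c) = if c = 0 then (2 ^ n : ℝ) else 0 := by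
  split_ifs with h
  · subst h
    have : ∀ y : BV n, dotp y 0 = 0 := by
      intro y; unfold dotp; simp
    simp [this, sgn_zero, card_BV]
  · have ⟨i, hi⟩ : ∃ i, c i ≠ 0 := by
      by_contra hc; push_neg at hc; exact h (funext fun i => hc i)
    have hci : c i = 1 := (zmod2_cases (c i)).resolve_left hi
    set e : BV n := Pi.single i 1 with he
    have hde : ∀ y : BV n, dotp (y + e) c = dotp y c + 1 := by
      intro y
      rw [dotp_add_left]
      congr 1
      unfold dotp
      rw [Finset.sum_eq_single i]
      · show e i * c i = 1; simp [he, hci]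
      · intro j _ hj; show e j * c j = 0; simp [he, Pi.single_eq_of_ne hj]
      · simp
    have key : ∑ y : BV n, sgn (dotp y c) = ∑ y : BV n, sgn (dotp (y + e) c) := by
      exact (Fintype.sum_equiv (Equiv.addRight e) _ _ (fun y => rfl)).symm
    have : ∑ y : BV n, sgn (dotp y c) = - ∑ y : BV n, sgn (dotp y c) := by
      nth_rewrite 1 [key]
      rw [← Finset.sum_neg_distrib]
      refine Finset.sum_congr rfl fun y _ => ?_
      rw [hde, sgn_add]
      rw [sgn_one]; ring
    linarith

open Matrix in
noncomputable def tr {n : ℕ} (A : BV n →ₗ[ZMod 2] BV n) : BV n →ₗ[ZMod 2] BV n :=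
  Matrix.toLin' (LinearMap.toMatrix' A)ᵀ

lemma dotp_eq_dotProduct {n : ℕ} (x y : BV n) : dotp x y = dotProduct x y := rfl

open Matrix in
lemma dotp_tr {n : ℕ} (A : BV n →ₗ[ZMod 2] BV n) (x y : BV n) :
    dotp x (A y) = dotp (tr A x) y := by
  have hA : A y = (LinearMap.toMatrix' A) *ᵥ y := by
    rw [← Matrix.toLin'_apply, Matrix.toLin'_toMatrix']
  rw [dotp_eq_dotProduct, dotp_eq_dotProduct, hA]
  show x ⬝ᵥ _ = _
  rw [Matrix.dotProduct_mulVec]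
  show _ = Matrix.toLin' (LinearMap.toMatrix' A)ᵀ x ⬝ᵥ y
  rw [Matrix.toLin'_apply, Matrix.mulVec_transpose]

open Matrix in
lemma dotp_tr' {n : ℕ} (A : BV n →ₗ[ZMod 2] BV n) (x y : BV n) :
    dotp x (tr A y) = dotp (A x) y := by
  have hA : A x = (LinearMap.toMatrix' A) *ᵥ x := by
    rw [← Matrix.toLin'_apply, Matrix.toLin'_toMatrix']
  rw [dotp_eq_dotProduct, dotp_eq_dotProduct, hA]
  show x ⬝ᵥ (Matrix.toLin' (LinearMap.toMatrix' A)ᵀ y) = ((LinearMap.toMatrix' A) *ᵥ x) ⬝ᵥ y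
  rw [Matrix.toLin'_apply, Matrix.dotProduct_mulVec, Matrix.vecMul_transpose]

lemma zmod2_add_self (a : ZMod 2) : a + a = 0 := by
  rcases zmod2_cases a with rfl|rfl <;> decide

lemma dotp_zero_right {n : ℕ} (x : BV n) : dotp x 0 = 0 := by
  unfold dotp; simp

lemma eq_zero_of_dotp {n : ℕ} (v : BV n) (h : ∀ x, dotp x v = 0) : v = 0 := by
  funext i
  have := h (Pi.single i 1)
  unfold dotp at this
  rw [Finset.sum_eq_single i] at this
  · simpa using this
  · intro j _ hj; simp [Pi.single_eq_of_ne hj]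
  · simp

lemma exists_symm_ext {n : ℕ} (ℓ : BV n →ₗ[ZMod 2] BV n) :
    ∃ ℓ' : BV n →ₗ[ZMod 2] BV n, (∀ x y : BV n, dotp x (ℓ' y) = dotp (ℓ' x) y) ∧
      ∀ w : BV n, ℓ w + tr ℓ w = 0 → ℓ' w = ℓ w := by
  classical
  set K := LinearMap.ker (ℓ + tr ℓ) with hK
  obtain ⟨K', hK'⟩ := Submodule.exists_isCompl K
  set P : BV n →ₗ[ZMod 2] BV n := K.subtype ∘ₗ (K.projectionOnto K' hK') with hP
  have hPmem : ∀ v, ℓ (P v) + tr ℓ (P v) = 0 := by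
    intro v
    have : P v ∈ K := (K.projectionOnto K' hK' v).2
    simpa [hK, LinearMap.mem_ker] using this
  have hPfix : ∀ w : BV n, ℓ w + tr ℓ w = 0 → P w = w := by
    intro w hw
    have hwK : w ∈ K := by simpa [hK, LinearMap.mem_ker] using hw
    show (K.subtype) (K.projectionOnto K' hK' w) = w
    rw [show K.projectionOnto K' hK' w
        = K.projectionOnto K' hK' (⟨w, hwK⟩ : K) from rfl,
      Submodule.linearProjOfIsCompl_apply_left hK' ⟨w, hwK⟩]
    rfl
  have htrK : ∀ v, tr ℓ (P v) = ℓ (P v) := by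
    intro v
    have h0 := hPmem v
    calc tr ℓ (P v) = ℓ (P v) + (ℓ (P v) + tr ℓ (P v)) := by
          rw [← add_assoc, bv_add_self, zero_add]
      _ = ℓ (P v) := by rw [h0, add_zero]
  refine ⟨ℓ ∘ₗ P + tr (ℓ ∘ₗ P) + (tr P) ∘ₗ (ℓ ∘ₗ P), ?_, ?_⟩
  · intro x y
    have expand : ∀ x y : BV n,
        dotp x ((ℓ ∘ₗ P + tr (ℓ ∘ₗ P) + (tr P) ∘ₗ (ℓ ∘ₗ P)) y)
          = dotp x (ℓ (P y)) + dotp (ℓ (P x)) y + dotp (P x) (ℓ (P y)) := by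
      intro x y
      rw [LinearMap.add_apply, LinearMap.add_apply, dotp_add_right, dotp_add_right]
      congr 1
      · congr 1
        exact dotp_tr' (ℓ ∘ₗ P) x y
      · exact dotp_tr' P x _
    have h3 : dotp (P x) (ℓ (P y)) = dotp (P y) (ℓ (P x)) := by
      rw [dotp_tr ℓ (P x) (P y), htrK, dotp_comm]
    rw [dotp_comm ((ℓ ∘ₗ P + tr (ℓ ∘ₗ P) + (tr P) ∘ₗ (ℓ ∘ₗ P)) x) y, expand x y, expand y x,
      h3, dotp_comm x (ℓ (P y)), dotp_comm (ℓ (P x)) y]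
    ring
  · intro w hw
    rw [LinearMap.add_apply, LinearMap.add_apply]
    have hPw : P w = w := hPfix w hw
    show ℓ (P w) + tr (ℓ ∘ₗ P) w + tr P (ℓ (P w)) = ℓ w
    rw [hPw, add_assoc]
    have : tr (ℓ ∘ₗ P) w + tr P (ℓ w) = 0 := by
      apply eq_zero_of_dotp
      intro x
      rw [dotp_add_right, dotp_tr' (ℓ ∘ₗ P) x w, dotp_tr' P x (ℓ w)]
      show dotp (ℓ (P x)) w + dotp (P x) (ℓ w) = 0
      rw [dotp_tr ℓ (P x) w, htrK, dotp_comm (ℓ (P x)) w]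
      exact zmod2_add_self _
    rw [this, add_zero]

/-- Symmetrization step: if `f ≥ 0` has bounded fibers, satisfies the symplectic Fourier
inversion identity and normalization, vanishes on `⟨y,α⟩ = 1`, and a linear map `ℓ`
satisfies `Σ_y f(y, ℓ y) = η·2^n`, then there is a symmetric linear map `ℓ'` with
`Σ_y f(y, ℓ' y) ≥ η²·2^n`. -/
theorem stmt11 (n : ℕ) (C η : ℝ) (f : Pt n → ℝ) (hf : ∀ z, 0 ≤ f z)
    (ℓ : BV n →ₗ[ZMod 2] BV n)
    (hbound : ∀ y : BV n, ∑ α : BV n, f (y, α) ≤ C)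
    (hsum : ∑ y : BV n, f (y, ℓ y) = η * 2 ^ n)
    (hzero : ∀ y α : BV n, dotp y α = 1 → f (y, α) = 0)
    (hinv : ∀ z : Pt n, f z = (1 / 2 ^ n : ℝ) * ∑ z' : Pt n, sgn (symp z z') * f z')
    (hnorm : (1 / 2 ^ n : ℝ) * ∑ z : Pt n, f z = 1) :
    ∃ ℓ' : BV n →ₗ[ZMod 2] BV n,
      (∀ x y : BV n, dotp x (ℓ' y) = dotp (ℓ' x) y) ∧
      η ^ 2 * 2 ^ n ≤ ∑ y : BV n, f (y, ℓ' y) := by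
  classical
  obtain ⟨ℓ', hsym, hrestr⟩ := exists_symm_ext ℓ
  refine ⟨ℓ', hsym, ?_⟩
  set N : ℝ := (2:ℝ) ^ n with hNdef
  have hN : (0:ℝ) < N := by positivity
  set q : BV n → ZMod 2 := fun y => dotp y (ℓ y) with hqdef
  set g : BV n → ℝ := fun α => ∑ y' : BV n, f (y', tr ℓ y' + α) with hgdef
  set hh : BV n → ℝ := fun α => (1/N) * ∑ y : BV n, sgn (q y + dotp y α) with hhdef
  have hg0 : ∀ α, 0 ≤ g α := fun α => Finset.sum_nonneg fun y _ => hf _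
  -- (A) Fourier formula for f (w, ℓ w)
  have hA : ∀ w : BV n, ∑ α : BV n, sgn (dotp w α) * g α = N * f (w, ℓ w) := by
    intro w
    have h2 : ∑ z' : Pt n, sgn (symp (w, ℓ w) z') * f z'
        = ∑ α : BV n, sgn (dotp w α) * g α := by
      rw [Fintype.sum_prod_type]
      have inner : ∀ y' : BV n,
          ∑ α' : BV n, sgn (symp (w, ℓ w) (y', α')) * f (y', α')
            = ∑ α : BV n, sgn (dotp w α) * f (y', tr ℓ y' + α) := by
        intro y'
        refine (Fintype.sum_equiv (Equiv.addLeft (tr ℓ y')) _ _ ?_).symm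
        intro α
        simp only [Equiv.coe_addLeft]
        have hs : symp (w, ℓ w) (y', tr ℓ y' + α) = dotp w α := by
          show dotp w (tr ℓ y' + α) + dotp y' (ℓ w) = dotp w α
          rw [dotp_add_right, dotp_tr ℓ y' w, dotp_comm (tr ℓ y') w]
          have : ∀ a b : ZMod 2, a + b + a = b := by decide
          exact this _ _
        rw [hs]
      calc ∑ y' : BV n, ∑ α' : BV n, sgn (symp (w, ℓ w) (y', α')) * f (y', α')
          = ∑ y' : BV n, ∑ α : BV n, sgn (dotp w α) * f (y', tr ℓ y' + α) :=
            Finset.sum_congr rfl fun y' _ => inner y'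
        _ = ∑ α : BV n, ∑ y' : BV n, sgn (dotp w α) * f (y', tr ℓ y' + α) := Finset.sum_comm
        _ = ∑ α : BV n, sgn (dotp w α) * g α :=
            Finset.sum_congr rfl fun α _ => (Finset.mul_sum _ _ _).symm
    have h1 := hinv (w, ℓ w)
    rw [h2] at h1
    rw [h1]
    have hN' : N ≠ 0 := ne_of_gt hN
    field_simp
  -- (B) total mass
  have hB : ∑ α : BV n, g α = N := by
    have hcalc : ∑ α : BV n, g α = ∑ z : Pt n, f z := by
      calc ∑ α : BV n, g α = ∑ α : BV n, ∑ y' : BV n, f (y', tr ℓ y' + α) := rfl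
        _ = ∑ y' : BV n, ∑ α : BV n, f (y', tr ℓ y' + α) := Finset.sum_comm
        _ = ∑ y' : BV n, ∑ β : BV n, f (y', β) := by
            refine Finset.sum_congr rfl fun y' _ => ?_
            exact Fintype.sum_equiv (Equiv.addLeft (tr ℓ y')) _ _ fun α => rfl
        _ = ∑ z : Pt n, f z := (Fintype.sum_prod_type _).symm
    rw [hcalc]
    have hN' : N ≠ 0 := ne_of_gt hN
    have h1 := hnorm
    field_simp at h1
    linarith
  -- vanishing on odd part
  have hQ : ∀ w : BV n, f (w, ℓ w) * sgn (q w) = f (w, ℓ w) := by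
    intro w
    rcases zmod2_cases (q w) with h0 | h1
    · rw [h0, sgn_zero, mul_one]
    · rw [hzero w (ℓ w) h1]
      ring
  -- (C)
  have hC : η * N = ∑ α : BV n, g α * hh α := by
    symm
    calc ∑ α : BV n, g α * hh α
        = ∑ α : BV n, ∑ y : BV n, (1/N) * (g α * sgn (q y + dotp y α)) := by
          refine Finset.sum_congr rfl fun α _ => ?_
          show g α * ((1/N) * ∑ y : BV n, sgn (q y + dotp y α)) = _
          rw [← Finset.mul_sum, ← Finset.mul_sum]
          ring
      _ = ∑ y : BV n, ∑ α : BV n, (1/N) * (g α * sgn (q y + dotp y α)) := Finset.sum_comm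
      _ = ∑ y : BV n, (1/N) * (sgn (q y) * ∑ α : BV n, sgn (dotp y α) * g α) := by
          refine Finset.sum_congr rfl fun y _ => ?_
          rw [Finset.mul_sum, Finset.mul_sum]
          exact Finset.sum_congr rfl fun α _ => by rw [sgn_add]; ring
      _ = ∑ y : BV n, f (y, ℓ y) * sgn (q y) := by
          refine Finset.sum_congr rfl fun y _ => ?_
          rw [hA y]
          field_simp
      _ = ∑ y : BV n, f (y, ℓ y) := Finset.sum_congr rfl fun y _ => hQ y
      _ = η * N := hsum
  -- quadratic expansion
  have hquad : ∀ y w : BV n, q (y + w) = q y + dotp y (ℓ w) + dotp y (tr ℓ w) + q w := by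
    intro y w
    show dotp (y + w) (ℓ (y + w)) = _
    rw [map_add, dotp_add_left, dotp_add_right, dotp_add_right,
      dotp_comm w (ℓ y), ← dotp_tr' ℓ y w]
    show _ = dotp y (ℓ y) + _ + _ + dotp w (ℓ w)
    ring
  have hss : ∀ (α y w : BV n),
      sgn (q y + dotp y α) * sgn (q (y + w) + dotp (y + w) α)
        = sgn (dotp y (ℓ w + tr ℓ w)) * (sgn (q w) * sgn (dotp w α)) := by
    intro α y w
    rw [← sgn_add, ← sgn_add, ← sgn_add]
    congr 1
    rw [hquad, dotp_add_left y w α, dotp_add_right y (ℓ w) (tr ℓ w)]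
    have h2 : (2 : ZMod 2) = 0 := rfl
    ring_nf
    rw [h2]
    ring
  -- square of hh
  have hh2 : ∀ α : BV n, hh α ^ 2
      = (1/N^2) * ∑ y : BV n, ∑ w : BV n,
          sgn (dotp y (ℓ w + tr ℓ w)) * (sgn (q w) * sgn (dotp w α)) := by
    intro α
    show ((1/N) * ∑ y : BV n, sgn (q y + dotp y α)) ^ 2 = _
    rw [mul_pow]
    have hpow : (1/N : ℝ)^2 = 1/N^2 := by ring
    rw [hpow]
    congr 1
    rw [sq, Finset.sum_mul_sum]
    refine Finset.sum_congr rfl fun y _ => ?_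
    refine (Fintype.sum_equiv (Equiv.addLeft y) _ _ ?_).symm
    intro w
    simp only [Equiv.coe_addLeft]
    exact (hss α y w).symm
  -- (E)
  have hE : ∑ α : BV n, g α * hh α ^ 2
      = ∑ w : BV n, (if ℓ w + tr ℓ w = 0 then f (w, ℓ w) else 0) := by
    calc ∑ α : BV n, g α * hh α ^ 2
        = ∑ α : BV n, ∑ y : BV n, ∑ w : BV n,
            (1/N^2) * (sgn (dotp y (ℓ w + tr ℓ w)) * (sgn (q w) * (sgn (dotp w α) * g α))) := by
          refine Finset.sum_congr rfl fun α _ => ?_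
          rw [hh2 α]
          simp only [Finset.mul_sum]
          exact Finset.sum_congr rfl fun y _ => Finset.sum_congr rfl fun w _ => by ring
      _ = ∑ α : BV n, ∑ w : BV n, ∑ y : BV n,
            (1/N^2) * (sgn (dotp y (ℓ w + tr ℓ w)) * (sgn (q w) * (sgn (dotp w α) * g α))) :=
          Finset.sum_congr rfl fun α _ => Finset.sum_comm
      _ = ∑ w : BV n, ∑ α : BV n, ∑ y : BV n,
            (1/N^2) * (sgn (dotp y (ℓ w + tr ℓ w)) * (sgn (q w) * (sgn (dotp w α) * g α))) :=
          Finset.sum_comm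
      _ = ∑ w : BV n, (1/N^2) * (sgn (q w) *
            ((∑ y : BV n, sgn (dotp y (ℓ w + tr ℓ w))) * (∑ α : BV n, sgn (dotp w α) * g α))) := by
          refine Finset.sum_congr rfl fun w _ => ?_
          rw [Finset.sum_comm, Finset.sum_mul_sum]
          simp only [Finset.mul_sum]
          exact Finset.sum_congr rfl fun y _ => Finset.sum_congr rfl fun α _ => by ring
      _ = ∑ w : BV n, (if ℓ w + tr ℓ w = 0 then f (w, ℓ w) else 0) := by
          refine Finset.sum_congr rfl fun w _ => ?_
          rw [sum_sgn_dotp, hA w, ← hNdef]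
          split_ifs with hw
          · have hq := hQ w
            field_simp
            linear_combination hq
          · ring
  -- Cauchy-Schwarz
  have hCS : (∑ α : BV n, g α * hh α) ^ 2
      ≤ (∑ α : BV n, g α) * ∑ α : BV n, g α * hh α ^ 2 := by
    refine Finset.sum_sq_le_sum_mul_sum_of_sq_eq_mul _ (fun α _ => hg0 α)
      (fun α _ => mul_nonneg (hg0 α) (sq_nonneg _)) (fun α _ => by ring)
  -- assemble
  set T : ℝ := ∑ w : BV n, (if ℓ w + tr ℓ w = 0 then f (w, ℓ w) else 0) with hT
  have h1 : (η * N)^2 ≤ N * T := by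
    calc (η * N)^2 = (∑ α : BV n, g α * hh α)^2 := by rw [hC]
      _ ≤ (∑ α : BV n, g α) * ∑ α : BV n, g α * hh α ^ 2 := hCS
      _ = N * T := by rw [hB, hE]
  have hKle : T ≤ ∑ y : BV n, f (y, ℓ' y) := by
    refine Finset.sum_le_sum fun w _ => ?_
    split_ifs with hw
    · rw [hrestr w hw]
    · exact hf _
  have h2 : N * (η^2 * N) ≤ N * T := by
    calc N * (η^2 * N) = (η * N)^2 := by ring
      _ ≤ N * T := h1
  exact le_trans ((mul_le_mul_iff_right₀ hN).mp h2) hKle
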